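/- Let T̂(t) be a contraction semigroup on L_α with decomposition T̂(t) = 𝟙* + 𝟙*T̂(t)(1−𝟙*) + T̃(t)(1−𝟙*) where T̃(t) = (1−𝟙*)T̂(t)|_{L_α^{≥1}} satisfies ‖T̃(t)G‖ ≤ C e^{−(λ₀−ε)t}‖G‖ for G with G(∅)=0. Let P̂* be a projection on the dual space K_α with T̂(t)*P̂* = P̂*T̂(t)* = P̂* and k − P̂*k ∈ K_α^{≥1} for all k. Then for every k ∈ K_α and t ≥ 0, ‖T̂(t)*k − P̂*k‖_{K_α} ≤ C e^{−(λ₀−ε)t} ‖k − P̂*k‖_{K_α}; i.e. the adjoint semigroup is uniformly exponentially ergodic. -/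

import Mathlib

/-- Uniform exponential ergodicity of the adjoint semigroup.
`T` is a contraction semigroup on `L_α` with decomposition
`T̂(t) = 𝟙* + 𝟙*T̂(t)(1−𝟙*) + T̃(t)(1−𝟙*)` (here `P0` is multiplication by `𝟙*`,
`Q = 1 − P0`), where `T̃(t) = Q T̂(t) Q` decays exponentially.  `P̂*` is a projection
on the dual with `T̂(t)*P̂* = P̂*T̂(t)* = P̂*` and `k − P̂*k ∈ K_α^{≥1}` (i.e. it
annihilates the range of `P0`).  Then
`‖T̂(t)*k − P̂*k‖ ≤ C e^{−(λ₀−ε)t}‖k − P̂*k‖` for all `k` and `t ≥ 0`. -/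
theorem adjoint_semigroup_uniformly_ergodic
    {X : Type*} [NormedAddCommGroup X] [NormedSpace ℝ X]
    (T : ℝ → X →L[ℝ] X) (P0 Q : X →L[ℝ] X)
    (C lam0 eps : ℝ) (hC : 0 < C) (heps : 0 < eps) (hle : eps < lam0)
    (hPQ : P0 + Q = ContinuousLinearMap.id ℝ X)
    (hP0idem : P0.comp P0 = P0) (hQidem : Q.comp Q = Q) (hQnorm : ‖Q‖ ≤ 1)
    (hTcontr : ∀ t : ℝ, 0 ≤ t → ‖T t‖ ≤ 1)
    (hdec : ∀ t : ℝ, 0 ≤ t →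
      T t = P0 + P0.comp ((T t).comp Q) + Q.comp ((T t).comp Q))
    (hdecay : ∀ t : ℝ, 0 ≤ t → ∀ G : X,
      ‖Q (T t (Q G))‖ ≤ C * Real.exp (-(lam0 - eps) * t) * ‖Q G‖)
    (Pstar : StrongDual ℝ X →L[ℝ] StrongDual ℝ X)
    (hPstar_idem : Pstar.comp Pstar = Pstar)
    (hPstar_inv : ∀ t : ℝ, 0 ≤ t → ∀ k : StrongDual ℝ X,
      (Pstar k).comp (T t) = Pstar k ∧ Pstar (k.comp (T t)) = Pstar k)
    (hker : ∀ k : StrongDual ℝ X, (k - Pstar k).comp P0 = 0) :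
    ∀ k : StrongDual ℝ X, ∀ t : ℝ, 0 ≤ t →
      ‖k.comp (T t) - Pstar k‖ ≤ C * Real.exp (-(lam0 - eps) * t) * ‖k - Pstar k‖ := by
  intro k t ht
  set m := k - Pstar k with hm
  have h1 : k.comp (T t) - Pstar k = m.comp (T t) := by
    have := (hPstar_inv t ht k).1
    simp [hm, ContinuousLinearMap.sub_comp, this]
  have h2 : m.comp (T t) = m.comp (Q.comp ((T t).comp Q)) := by
    have hk0 : ∀ x, m (P0 x) = 0 := fun x => congrArg (fun f => f x) (hker k)
    ext G
    have hd := congrArg (fun A : X →L[ℝ] X => A G) (hdec t ht)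
    simp only [ContinuousLinearMap.add_apply, ContinuousLinearMap.comp_apply] at hd
    simp only [ContinuousLinearMap.comp_apply, hd, map_add, hk0, zero_add]
  rw [h1, h2]
  have hbound : ∀ G : X, ‖(m.comp (Q.comp ((T t).comp Q))) G‖ ≤
      (C * Real.exp (-(lam0 - eps) * t) * ‖m‖) * ‖G‖ := by
    intro G
    have := m.le_opNorm (Q (T t (Q G)))
    calc ‖m (Q (T t (Q G)))‖ ≤ ‖m‖ * ‖Q (T t (Q G))‖ := m.le_opNorm _
      _ ≤ ‖m‖ * (C * Real.exp (-(lam0 - eps) * t) * ‖Q G‖) := by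
          exact mul_le_mul_of_nonneg_left (hdecay t ht G) (norm_nonneg _)
      _ ≤ ‖m‖ * (C * Real.exp (-(lam0 - eps) * t) * ‖G‖) := by
          apply mul_le_mul_of_nonneg_left _ (norm_nonneg _)
          apply mul_le_mul_of_nonneg_left _ (by positivity)
          calc ‖Q G‖ ≤ ‖Q‖ * ‖G‖ := Q.le_opNorm G
            _ ≤ 1 * ‖G‖ := by
                exact mul_le_mul_of_nonneg_right hQnorm (norm_nonneg _)
            _ = ‖G‖ := one_mul _
      _ = (C * Real.exp (-(lam0 - eps) * t) * ‖m‖) * ‖G‖ := by ring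
  exact ContinuousLinearMap.opNorm_le_bound _ (by positivity) hbound
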